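/- For the complete bipartite graph K_{p,q} with 2 ≤ p ≤ q, the set of negative cycle vectors of all signings of K_{p,q} spans a real vector space of dimension p - 1. -/

import Mathlib

open Finset

/-- The set of edge sets of cycles of length `l` in `G`, as unoriented cycle subgraphs. -/
def cycleSets {V : Type*} [DecidableEq V] (G : SimpleGraph V) (l : ℕ) : Set (Finset (Sym2 V)) :=
  {C | ∃ (v : V) (w : G.Walk v v), w.IsCycle ∧ w.length = l ∧ w.edges.toFinset = C}

/-- The number of cycles of length `l` in `G`. -/
noncomputable def cycleCount {V : Type*} [DecidableEq V] (G : SimpleGraph V) (l : ℕ) : ℕ :=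
  (cycleSets G l).ncard

/-- The number of negative `l`-cycles of `G` signed with negative edge set `N`:
cycles meeting `N` in an odd number of edges. -/
noncomputable def negCycleCount {V : Type*} [DecidableEq V] (G : SimpleGraph V)
    (N : Finset (Sym2 V)) (l : ℕ) : ℕ :=
  {C | C ∈ cycleSets G l ∧ Odd (C ∩ N).card}.ncard

/-- The number of negative `l`-cycles of `G` with edge sign function `σ`. -/
noncomputable def negCycleCountS {V : Type*} [DecidableEq V] (G : SimpleGraph V)
    (σ : Sym2 V → ℤ) (l : ℕ) : ℕ :=
  {C | C ∈ cycleSets G l ∧ ∏ e ∈ C, σ e = -1}.ncard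

/-- A set of edges is a matching: its members are pairwise vertex-disjoint. -/
def IsMatchingSet {V : Type*} (S : Finset (Sym2 V)) : Prop :=
  ∀ e ∈ S, ∀ f ∈ S, e ≠ f → ∀ v : V, v ∈ e → v ∉ f

/-- The sign multiplier on edges produced by switching at the vertex set `X`. -/
def switchSign {V : Type*} [DecidableEq V] (X : Finset V) : Sym2 V → ℤ :=
  Sym2.lift ⟨fun a b => (if a ∈ X then (-1 : ℤ) else 1) * (if b ∈ X then (-1 : ℤ) else 1),
    fun _ _ => mul_comm _ _⟩

/-- The set of (potential) edges with exactly one endpoint in `X`. -/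
def crossEdges {V : Type*} [Fintype V] [DecidableEq V] (X : Finset V) : Finset (Sym2 V) :=
  (X ×ˢ Xᶜ).image fun p => s(p.1, p.2)

theorem chain_cons_old {α : Type*} {R : α → α → Prop} {a b : α} {l : List α} :
    List.Chain R a (b :: l) ↔ R a b ∧ List.Chain R b l := List.isChain_cons_cons

/-- Turn a list with chain adjacency into a walk. -/
def walkOfChain {V : Type*} {G : SimpleGraph V} :
    ∀ {u v : V} (l : List V), List.Chain G.Adj u (l ++ [v]) → G.Walk u v
  | _, _, [], h => SimpleGraph.Walk.cons (chain_cons_old.mp h).1 SimpleGraph.Walk.nil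
  | _, _, a :: l, h =>
      SimpleGraph.Walk.cons (chain_cons_old.mp h).1 (walkOfChain l (chain_cons_old.mp h).2)

theorem support_walkOfChain {V : Type*} {G : SimpleGraph V} :
    ∀ {u v : V} (l : List V) (h : List.Chain G.Adj u (l ++ [v])),
      (walkOfChain l h).support = u :: (l ++ [v])
  | u, v, [], h => by simp [walkOfChain]
  | u, v, a :: l, h => by
      simp [walkOfChain, support_walkOfChain l (chain_cons_old.mp h).2]

theorem length_walkOfChain {V : Type*} {G : SimpleGraph V} :
    ∀ {u v : V} (l : List V) (h : List.Chain G.Adj u (l ++ [v])),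
      (walkOfChain l h).length = l.length + 1
  | u, v, [], h => by simp [walkOfChain]
  | u, v, a :: l, h => by
      simp [walkOfChain, length_walkOfChain l (chain_cons_old.mp h).2]

theorem eq_of_start_edge {V : Type*} {G : SimpleGraph V} {u c v b : V} (h : G.Adj u c)
    (p : G.Walk c v) (hnod : (SimpleGraph.Walk.cons h p).support.Nodup)
    (hb : s(u, b) ∈ (SimpleGraph.Walk.cons h p).edges) : b = c := by
  rw [SimpleGraph.Walk.edges_cons, List.mem_cons] at hb
  rcases hb with hb | hb
  · exact Sym2.congr_right.mp hb
  · exfalso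
    have := p.fst_mem_support_of_mem_edges hb
    rw [SimpleGraph.Walk.support_cons, List.nodup_cons] at hnod
    exact hnod.1 this

theorem chain_range'_aux {S : ℕ → ℕ → Prop} (h : ∀ m, S m (m + 1)) :
    ∀ (n s t : ℕ), S (s + n) t → List.Chain S s (List.range' (s + 1) n ++ [t])
  | 0, s, t, ht => by simpa [List.Chain] using ht
  | n + 1, s, t, ht => by
      rw [List.range'_succ]
      exact List.Chain.cons (h s) (chain_range'_aux h n (s + 1) t (by
        have : s + 1 + n = s + (n + 1) := by omega
        rw [this]; exact ht))

theorem card_of_mem_cycleSets {V : Type*} [DecidableEq V] {G : SimpleGraph V} {l : ℕ}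
    {C : Finset (Sym2 V)} (h : C ∈ cycleSets G l) : C.card = l := by
  obtain ⟨v, w, hc, hl, rfl⟩ := h
  rw [List.toFinset_card_of_nodup hc.isTrail.edges_nodup, SimpleGraph.Walk.length_edges]
  exact hl

/-- existence of a 2k-cycle in the complete bipartite graph -/
theorem exists_cycle_finset (p q k : ℕ) (hp : 0 < p) (hq : 0 < q) (hk2 : 2 ≤ k) (hkp : k ≤ p)
    (hkq : k ≤ q) :
    ∃ S : Finset (Sym2 (Fin p ⊕ Fin q)),
      S ∈ cycleSets (completeBipartiteGraph (Fin p) (Fin q)) (2 * k) ∧ S.card = 2 * k := by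
  classical
  set G := completeBipartiteGraph (Fin p) (Fin q) with hG
  set f : ℕ → (Fin p ⊕ Fin q) := fun n =>
    if n % 2 = 0 then Sum.inl ⟨n / 2 % p, Nat.mod_lt _ hp⟩
    else Sum.inr ⟨n / 2 % q, Nat.mod_lt _ hq⟩ with hf
  have finj : ∀ m < 2 * k, ∀ n < 2 * k, f m = f n → m = n := by
    intro m hm n hn h
    have hm2 : m / 2 < p := by omega
    have hn2 : n / 2 < p := by omega
    have hm2q : m / 2 < q := by omega
    have hn2q : n / 2 < q := by omega
    rcases Nat.mod_two_eq_zero_or_one m with h1 | h1 <;>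
      rcases Nat.mod_two_eq_zero_or_one n with h2 | h2 <;>
      simp only [hf, h1, h2, if_true, if_false, reduceCtorEq, Sum.inl.injEq, Sum.inr.injEq,
        Fin.mk.injEq, Nat.mod_eq_of_lt, hm2, hn2, hm2q, hn2q, one_ne_zero] at h <;>
      omega
  have hadj1 : ∀ (a : Fin p) (b : Fin q), G.Adj (Sum.inl a) (Sum.inr b) := fun a b =>
    Or.inl ⟨rfl, rfl⟩
  have fadj : ∀ m n : ℕ, m % 2 ≠ n % 2 → G.Adj (f m) (f n) := by
    intro m n hmn
    rcases Nat.mod_two_eq_zero_or_one m with h1 | h1 <;>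
      rcases Nat.mod_two_eq_zero_or_one n with h2 | h2 <;>
      simp only [hf, h1, h2, if_true, if_false, one_ne_zero, reduceIte] at *
    · omega
    · exact hadj1 _ _
    · exact (hadj1 _ _).symm
    · omega
  -- the inner index list
  have hchain : List.Chain G.Adj (f 0) ((List.range' 1 (2 * k - 1)).map f ++ [f 0]) := by
    have : (List.range' 1 (2 * k - 1)).map f ++ [f 0] =
        (List.range' 1 (2 * k - 1) ++ [0]).map f := by simp
    rw [this, List.Chain, ← List.map_cons, List.isChain_map]
    refine chain_range'_aux (S := fun a b => G.Adj (f a) (f b)) (fun m => fadj _ _ (by omega))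
      (2 * k - 1) 0 0 (fadj _ _ (by omega))
  have hl : List.range' 1 (2 * k - 1) = 1 :: 2 :: List.range' 3 (2 * k - 3) := by
    rw [show 2 * k - 1 = (2 * k - 3) + 1 + 1 by omega, List.range'_succ, List.range'_succ]
  rw [hl] at hchain
  set w0 := walkOfChain (G := G) (f 1 :: f 2 :: (List.range' 3 (2 * k - 3)).map f) hchain
    with hw0
  have hsupp : w0.support = f 0 :: ((f 1 :: f 2 :: (List.range' 3 (2 * k - 3)).map f) ++ [f 0]) :=
    support_walkOfChain _ _
  have hnodup : ((f 1 :: f 2 :: (List.range' 3 (2 * k - 3)).map f) ++ [f 0]).Nodup := by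
    have : (f 1 :: f 2 :: (List.range' 3 (2 * k - 3)).map f) ++ [f 0] =
        ((1 :: 2 :: List.range' 3 (2 * k - 3)) ++ [0]).map f := by simp
    rw [this]
    refine List.Nodup.map_on ?_ ?_
    · intro x hx y hy hxy
      simp [List.mem_range'_1] at hx hy
      refine finj x (by omega) y (by omega) hxy
    · rw [← hl]
      have h0 : (0 : ℕ) ∉ List.range' 1 (2 * k - 1) := by
        simp [List.mem_range'_1]
      simpa [List.nodup_append, h0] using And.intro (List.nodup_range' (s := 1) (n := 2 * k - 1))
          (fun (a : ℕ) (ha : 1 ≤ a) (_ : a < 1 + (2 * k - 1)) => (by omega : ¬a = 0))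
  have hcyc : w0.IsCycle := by
    rw [hw0, walkOfChain]
    rw [SimpleGraph.Walk.cons_isCycle_iff]
    constructor
    · refine SimpleGraph.Walk.IsPath.mk' ?_
      rw [support_walkOfChain]
      exact hnodup
    · intro hmem
      rw [Sym2.eq_swap] at hmem
      have h02 : f 0 = f 2 := by
        have hn : (walkOfChain (G := G) (f 2 :: (List.range' 3 (2 * k - 3)).map f)
            (chain_cons_old.mp hchain).2).support.Nodup := by
          rw [support_walkOfChain]; exact hnodup
        rw [walkOfChain] at hmem hn
        exact eq_of_start_edge _ _ hn hmem
      have := finj 0 (by omega) 2 (by omega) h02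
      omega
  have hlen : w0.length = 2 * k := by
    rw [hw0, length_walkOfChain]
    simp only [List.length_cons, List.length_map, List.length_range']
    omega
  refine ⟨w0.edges.toFinset, ⟨f 0, w0, hcyc, hlen, rfl⟩, ?_⟩
  exact card_of_mem_cycleSets ⟨f 0, w0, hcyc, hlen, rfl⟩

section signsum

variable {α : Type*} [DecidableEq α] [Fintype α]

def flipSet (t : α) (N : Finset α) : Finset α := if t ∈ N then N.erase t else insert t N

theorem flipSet_involutive (t : α) : Function.Involutive (flipSet t) := by
  intro N
  unfold flipSet
  by_cases h : t ∈ N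
  · simp [h, Finset.insert_erase h]
  · simp [h, Finset.erase_insert h]

theorem sign_flip_mem {T : Finset α} {t : α} (ht : t ∈ T) (N : Finset α) :
    (-1 : ℝ) ^ ((flipSet t N ∩ T).card) = -(-1) ^ ((N ∩ T).card) := by
  unfold flipSet
  by_cases h : t ∈ N
  · rw [if_pos h, Finset.erase_inter]
    have htm : t ∈ N ∩ T := Finset.mem_inter.mpr ⟨h, ht⟩
    rw [Finset.card_erase_of_mem htm]
    have hc : 1 ≤ (N ∩ T).card := Finset.card_pos.mpr ⟨t, htm⟩
    have h2 : (N ∩ T).card = ((N ∩ T).card - 1) + 1 := by omega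
    have h3 : (-1 : ℝ) ^ ((N ∩ T).card) = (-1) ^ ((N ∩ T).card - 1) * (-1) := by
      conv_lhs => rw [h2]
      rw [pow_succ]
    rw [h3]
    ring
  · rw [if_neg h, Finset.insert_inter_of_mem ht,
      Finset.card_insert_of_notMem (by simp [h]), pow_succ]
    ring

theorem sign_flip_not_mem {T : Finset α} {t : α} (ht : t ∉ T) (N : Finset α) :
    flipSet t N ∩ T = N ∩ T := by
  unfold flipSet
  by_cases h : t ∈ N
  · rw [if_pos h, Finset.erase_inter, Finset.erase_eq_of_notMem (by simp [ht])]
  · rw [if_neg h, Finset.insert_inter_of_notMem ht]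

theorem sum_flip_zero (F : Finset α → ℝ) (t : α) (hF : ∀ N, F (flipSet t N) = -F N) :
    ∑ N : Finset α, F N = 0 := by
  have h := Fintype.sum_bijective (flipSet t) (flipSet_involutive t).bijective
      (fun N => F (flipSet t N)) F (fun N => rfl)
  have h2 : ∑ N : Finset α, F (flipSet t N) = ∑ N : Finset α, -F N :=
    Finset.sum_congr rfl fun N _ => hF N
  rw [h2, Finset.sum_neg_distrib] at h
  linarith

theorem sum_sign_eq_zero {T : Finset α} (hT : T.Nonempty) :
    ∑ N : Finset α, (-1 : ℝ) ^ ((N ∩ T).card) = 0 := by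
  obtain ⟨t, ht⟩ := hT
  exact sum_flip_zero _ t fun N => by rw [sign_flip_mem ht]

theorem sum_sign_two {S C : Finset α} (h : S ≠ C) :
    ∑ N : Finset α, (-1 : ℝ) ^ ((N ∩ S).card) * (-1) ^ ((N ∩ C).card) = 0 := by
  have hex : ∃ t, (t ∈ S ∧ t ∉ C) ∨ (t ∈ C ∧ t ∉ S) := by
    by_contra hc
    push_neg at hc
    exact h (Finset.ext fun a => by have := hc a; tauto)
  obtain ⟨t, ⟨h1, h2⟩ | ⟨h1, h2⟩⟩ := hex
  · exact sum_flip_zero _ t fun N => by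
      rw [sign_flip_mem h1, sign_flip_not_mem h2]; ring
  · exact sum_flip_zero _ t fun N => by
      rw [sign_flip_mem h1, sign_flip_not_mem h2]; ring

theorem indicator_eq (n : ℕ) : (if Odd n then (1 : ℝ) else 0) = (1 - (-1) ^ n) / 2 := by
  rcases Nat.even_or_odd n with h | h
  · rw [if_neg (Nat.not_odd_iff_even.mpr h), h.neg_one_pow]
    norm_num
  · rw [if_pos h, h.neg_one_pow]
    norm_num

theorem innerSignSum (S C : Finset α) (hS : S.Nonempty) :
    ∑ N : Finset α, (-1 : ℝ) ^ ((N ∩ S).card) * (if Odd (C ∩ N).card then (1 : ℝ) else 0) =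
      if C = S then -(Fintype.card (Finset α) : ℝ) / 2 else 0 := by
  have key : ∀ N : Finset α, (-1 : ℝ) ^ ((N ∩ S).card) *
      (if Odd (C ∩ N).card then (1 : ℝ) else 0) =
      (1 / 2) * (-1) ^ ((N ∩ S).card)
        - (1 / 2) * ((-1) ^ ((N ∩ S).card) * (-1) ^ ((N ∩ C).card)) := by
    intro N
    rw [Finset.inter_comm C N, indicator_eq]
    ring
  rw [Finset.sum_congr rfl fun N _ => key N, Finset.sum_sub_distrib, ← Finset.mul_sum,
    ← Finset.mul_sum, sum_sign_eq_zero hS]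
  by_cases hC : C = S
  · subst hC
    have hone : ∑ N : Finset α, (-1 : ℝ) ^ ((N ∩ C).card) * (-1) ^ ((N ∩ C).card) =
        (Fintype.card (Finset α) : ℝ) := by
      rw [Finset.sum_congr rfl fun N _ => ?_, Finset.sum_const, nsmul_eq_mul, mul_one,
        Finset.card_univ]
      rw [← pow_add]
      exact Even.neg_one_pow ⟨_, rfl⟩
    rw [if_pos rfl, hone]
    ring
  · rw [if_neg hC, sum_sign_two fun hh => hC hh.symm]
    ring

end signsum


/-- The negative cycle vectors of all signings of `K_{p,q}` (`2 ≤ p ≤ q`),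
indexed by the cycle spectrum `{4, 6, …, 2p}`, span a space of dimension `p - 1`. -/
theorem stmt11 (p q : ℕ) (hp : 2 ≤ p) (hpq : p ≤ q) :
    Module.finrank ℝ (Submodule.span ℝ
      (Set.range fun N : Finset (Sym2 (Fin p ⊕ Fin q)) =>
        fun i : Fin (p - 1) =>
          (negCycleCount (completeBipartiteGraph (Fin p) (Fin q)) N (2 * ((i : ℕ) + 2)) : ℝ)))
      = p - 1 := by
  classical
  set G := completeBipartiteGraph (Fin p) (Fin q) with hG
  set vm : Finset (Sym2 (Fin p ⊕ Fin q)) → (Fin (p - 1) → ℝ) := fun N =>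
    fun i : Fin (p - 1) => (negCycleCount G N (2 * ((i : ℕ) + 2)) : ℝ) with hvm
  set c0 : ℝ := (Fintype.card (Finset (Sym2 (Fin p ⊕ Fin q))) : ℝ) with hc0
  have hc0pos : 0 < c0 := by
    rw [hc0]
    exact_mod_cast Fintype.card_pos
  have hcount : ∀ (N : Finset (Sym2 (Fin p ⊕ Fin q))) (L : ℕ),
      (negCycleCount G N L : ℝ) =
        ∑ C ∈ (Set.toFinite (cycleSets G L)).toFinset,
          (if Odd (C ∩ N).card then (1 : ℝ) else 0) := by
    intro N L
    have hset : {C | C ∈ cycleSets G L ∧ Odd (C ∩ N).card} =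
        ↑((Set.toFinite (cycleSets G L)).toFinset.filter fun C => Odd (C ∩ N).card) := by
      ext C
      simp only [Set.mem_setOf_eq, Finset.coe_filter, Set.Finite.mem_toFinset]
    rw [negCycleCount, hset, Set.ncard_coe_finset, Finset.card_filter]
    push_cast
    simp [apply_ite (Nat.cast : ℕ → ℝ)]
  have hsingle : ∀ i : Fin (p - 1),
      (fun j => if i = j then (1 : ℝ) else 0) ∈ Submodule.span ℝ (Set.range vm) := by
    intro i
    obtain ⟨S, hS, hScard⟩ := exists_cycle_finset p q ((i : ℕ) + 2) (by omega) (by omega)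
      (by omega) (by have := i.2; omega) (by have := i.2; omega)
    have hSne : S.Nonempty := Finset.card_pos.mp (by rw [hScard]; omega)
    have hclaim : ∑ N : Finset (Sym2 (Fin p ⊕ Fin q)), ((-1 : ℝ) ^ ((N ∩ S).card)) • vm N =
        (-c0 / 2) • fun j => if i = j then (1 : ℝ) else 0 := by
      funext j
      rw [Finset.sum_apply]
      simp only [Pi.smul_apply, smul_eq_mul, hvm]
      rw [Finset.sum_congr rfl fun N _ => by rw [hcount N (2 * ((j : ℕ) + 2))]]
      rw [Finset.sum_congr rfl fun N _ => Finset.mul_sum _ _ _, Finset.sum_comm]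
      rw [Finset.sum_congr rfl fun C _ => innerSignSum S C hSne]
      rw [Finset.sum_ite_eq' _ S fun _ => -c0 / 2]
      have hmemiff : S ∈ (Set.toFinite (cycleSets G (2 * ((j : ℕ) + 2)))).toFinset ↔ i = j := by
        rw [Set.Finite.mem_toFinset]
        constructor
        · intro hmem
          have := card_of_mem_cycleSets hmem
          rw [hScard] at this
          exact Fin.ext (by omega)
        · rintro rfl
          exact hS
      by_cases hij : i = j
      · rw [if_pos (hmemiff.mpr hij), if_pos hij, mul_one]
      · rw [if_neg fun hh => hij (hmemiff.mp hh), if_neg hij, mul_zero]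
    have hsum_mem : (∑ N : Finset (Sym2 (Fin p ⊕ Fin q)), ((-1 : ℝ) ^ ((N ∩ S).card)) • vm N)
        ∈ Submodule.span ℝ (Set.range vm) :=
      Submodule.sum_mem _ fun N _ =>
        Submodule.smul_mem _ _ (Submodule.subset_span ⟨N, rfl⟩)
    rw [hclaim] at hsum_mem
    have hne : (-c0 / 2 : ℝ) ≠ 0 := by
      intro h0
      rw [div_eq_zero_iff] at h0
      rcases h0 with h0 | h0 <;> [skip; norm_num at h0]
      exact absurd (neg_eq_zero.mp h0) (ne_of_gt hc0pos)
    have := Submodule.smul_mem _ ((-c0 / 2 : ℝ)⁻¹) hsum_mem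
    rwa [smul_smul, inv_mul_cancel₀ hne, one_smul] at this
  have hspan : Submodule.span ℝ (Set.range vm) = ⊤ := by
    rw [eq_top_iff]
    intro x _
    rw [pi_eq_sum_univ x]
    exact Submodule.sum_mem _ fun i _ => Submodule.smul_mem _ _ (hsingle i)
  rw [hspan, finrank_top, Module.finrank_fintype_fun_eq_card, Fintype.card_fin]
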